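/- arXiv:1803.06922 — 2 statements merged into one kernel-verified Lean document; each statement's English description precedes it below -/
import Mathlib

section
/- Let \Sigma be a d \times d positive definite matrix, b \in R^d \setminus (-\infty,0]^d, and let \tilde b be the unique solution of \Pi_\Sigma(b) with associated index set I. Then for every x \in R^d and every index set F \subseteq {1,...,d} containing I, x^T \Sigma^{-1} \tilde b = x_F^T (\Sigma_{FF})^{-1} \tilde b_F. -/
open MeasureTheory ProbabilityTheory Filter Matrix
open scoped Topology ENNReal

noncomputable section

/-- Submatrix of `A` keeping rows with indices in `I` and columns with indices in `J`. -/
def subM {ι : Type*} (A : Matrix ι ι ℝ) (I J : Finset ι) : Matrix ↥I ↥J ℝ :=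
  fun i j => A i j

/-- Subvector of `c` keeping the entries with indices in `I`. -/
def subV {ι : Type*} (c : ι → ℝ) (I : Finset ι) : ↥I → ℝ := fun i => c i

/-- Density of a centered Gaussian vector with covariance matrix `S`. -/
def gaussPDF {ι : Type*} [Fintype ι] [DecidableEq ι] (S : Matrix ι ι ℝ) (x : ι → ℝ) : ℝ :=
  (Real.sqrt ((2 * Real.pi) ^ Fintype.card ι * S.det))⁻¹ *
    Real.exp (-(x ⬝ᵥ S⁻¹.mulVec x) / 2)

/-- `X` is, under `P`, a centered Gaussian random vector with covariance matrix `S`. -/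
def IsCenteredGaussianRV {Ω ι : Type*} [MeasurableSpace Ω] [Fintype ι] [DecidableEq ι]
    (P : Measure Ω) (X : Ω → ι → ℝ) (S : Matrix ι ι ℝ) : Prop :=
  Measure.map X P =
    (volume : Measure (ι → ℝ)).withDensity fun x => ENNReal.ofReal (gaussPDF S x)

/-- `bt` is a solution of the quadratic programming problem `Π_A(c)`:
minimise `x ⬝ Σ⁻¹ x` under `x ≥ c`. -/
def IsQPSol {ι : Type*} [Fintype ι] [DecidableEq ι] (A : Matrix ι ι ℝ) (c bt : ι → ℝ) : Prop :=
  (∀ i, c i ≤ bt i) ∧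
    ∀ x : ι → ℝ, (∀ i, c i ≤ x i) → bt ⬝ᵥ A⁻¹.mulVec bt ≤ x ⬝ᵥ A⁻¹.mulVec x

/-- `I` is the index set determined by the quadratic programming problem `Π_A(c)`
with solution `bt`. -/
def IsQPIndex {ι : Type*} [Fintype ι] [DecidableEq ι] (A : Matrix ι ι ℝ)
    (c bt : ι → ℝ) (I : Finset ι) : Prop :=
  I.Nonempty ∧ (∀ i ∈ I, bt i = c i) ∧
    (∀ i : ↥I, 0 < (subM A I I)⁻¹.mulVec (subV c I) i) ∧
    ∀ j : ι, j ∉ I → bt j = (fun i : ↥I => A j i) ⬝ᵥ (subM A I I)⁻¹.mulVec (subV c I)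

/-- `Σ_{i₀,I} (Σ_{II})⁻¹ c_I`. -/
def rowDot {ι : Type*} [Fintype ι] [DecidableEq ι] (A : Matrix ι ι ℝ) (c : ι → ℝ)
    (I : Finset ι) (i0 : ι) : ℝ :=
  (fun i : ↥I => A i0 i) ⬝ᵥ (subM A I I)⁻¹.mulVec (subV c I)

/-- `c_I ⬝ (Σ_{II})⁻¹ e_{i₀}`. -/
def eDot {ι : Type*} [Fintype ι] [DecidableEq ι] (A : Matrix ι ι ℝ) (c : ι → ℝ)
    (I : Finset ι) (i0 : ι) : ℝ :=
  subV c I ⬝ᵥ (subM A I I)⁻¹.mulVec fun j : ↥I => if (j : ι) = i0 then 1 else 0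

/-- Schur complement `Σ_{I^cI^c} - Σ_{I^cI}(Σ_{II})⁻¹Σ_{II^c}`, the covariance matrix of the
conditional Gaussian distribution of `X_{I^c}` given `X_I`. -/
def schurC {ι : Type*} [Fintype ι] [DecidableEq ι] (A : Matrix ι ι ℝ) (I : Finset ι) :
    Matrix ↥Iᶜ ↥Iᶜ ℝ :=
  subM A Iᶜ Iᶜ - subM A Iᶜ I * (subM A I I)⁻¹ * subM A I Iᶜ

/-- The conditional law of `X_{I^c}` given `X_I = 0`. -/
def condNu {ι : Type*} [Fintype ι] [DecidableEq ι] (A : Matrix ι ι ℝ) (I : Finset ι) :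
    Measure (↥Iᶜ → ℝ) :=
  (volume : Measure (↥Iᶜ → ℝ)).withDensity fun y => ENNReal.ofReal (gaussPDF (schurC A I) y)

/-- Survival function `Ḡ(x) = P(X_{i₀} > x, X_{N*} > 0 | X_I = 0) / P(X_{N*} > 0 | X_I = 0)`. -/
def Gbar {ι : Type*} [Fintype ι] [DecidableEq ι] (A : Matrix ι ι ℝ) (I Nstar : Finset ι)
    (i0 : ι) (x : ℝ) : ℝ :=
  (condNu A I {y : ↥Iᶜ → ℝ | (∀ j : ↥Iᶜ, (j : ι) = i0 → x < y j) ∧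
      ∀ j : ↥Iᶜ, (j : ι) ∈ Nstar → 0 < y j}).toReal /
    (condNu A I {y : ↥Iᶜ → ℝ | ∀ j : ↥Iᶜ, (j : ι) ∈ Nstar → 0 < y j}).toReal

/-- `E[(Y - μ)₊]` where `Y` has survival function `Gbar A I Nstar i0`. -/
def condPlusMean {ι : Type*} [Fintype ι] [DecidableEq ι] (A : Matrix ι ι ℝ)
    (I Nstar : Finset ι) (i0 : ι) (μ : ℝ) : ℝ :=
  (∫ y in {y : ↥Iᶜ → ℝ | ∀ j : ↥Iᶜ, (j : ι) ∈ Nstar → 0 < y j},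
      max ((∑ j : ↥Iᶜ, if (j : ι) = i0 then y j else 0) - μ) 0 ∂(condNu A I)) /
    (condNu A I {y : ↥Iᶜ → ℝ | ∀ j : ↥Iᶜ, (j : ι) ∈ Nstar → 0 < y j}).toReal

/-- `E[Y]` where `Y` has survival function `Gbar A I Nstar i0`. -/
def condMean {ι : Type*} [Fintype ι] [DecidableEq ι] (A : Matrix ι ι ℝ)
    (I Nstar : Finset ι) (i0 : ι) : ℝ :=
  (∫ y in {y : ↥Iᶜ → ℝ | ∀ j : ↥Iᶜ, (j : ι) ∈ Nstar → 0 < y j},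
      (∑ j : ↥Iᶜ, if (j : ι) = i0 then y j else 0) ∂(condNu A I)) /
    (condNu A I {y : ↥Iᶜ → ℝ | ∀ j : ↥Iᶜ, (j : ι) ∈ Nstar → 0 < y j}).toReal

/-- The conditioning event `{X_2 > c_2 u, ..., X_d > c_d u}`. -/
def tailEvent {Ω : Type*} {d : ℕ} [NeZero d] (X : Ω → Fin d → ℝ) (c : Fin d → ℝ) (u : ℝ) :
    Set Ω := {ω | ∀ i : Fin d, i ≠ 0 → c i * u < X ω i}

/-- The marginal mean excess `E(c,u) = E[(X_1 - c_1 u - μ)₊ | X_2 > c_2 u, ..., X_d > c_d u]`. -/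
def mmeV {Ω : Type*} [MeasurableSpace Ω] {d : ℕ} [NeZero d] (P : Measure Ω)
    (X : Ω → Fin d → ℝ) (c : Fin d → ℝ) (μ u : ℝ) : ℝ :=
  (∫ ω in tailEvent X c u, max (X ω 0 - c 0 * u - μ) 0 ∂P) / (P (tailEvent X c u)).toReal

/-- The marginal expected shortfall `S(c,u) = E[X_1 | X_2 > c_2 u, ..., X_d > c_d u]`. -/
def mesV {Ω : Type*} [MeasurableSpace Ω] {d : ℕ} [NeZero d] (P : Measure Ω)
    (X : Ω → Fin d → ℝ) (c : Fin d → ℝ) (u : ℝ) : ℝ :=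
  (∫ ω in tailEvent X c u, X ω 0 ∂P) / (P (tailEvent X c u)).toReal

/-- The multivariate conditional tail expectation `M(c,u) = E[X_1 | X > c u]`. -/
def mcteV {Ω : Type*} [MeasurableSpace Ω] {d : ℕ} [NeZero d] (P : Measure Ω)
    (X : Ω → Fin d → ℝ) (c : Fin d → ℝ) (u : ℝ) : ℝ :=
  (∫ ω in {ω | ∀ i, c i * u < X ω i}, X ω 0 ∂P) / (P {ω | ∀ i, c i * u < X ω i}).toReal

/-- The index set `{2,...,d}` of the components of `X_{-1}`. -/
def offFirst (d : ℕ) [NeZero d] : Finset (Fin d) := Finset.univ.filter fun i => i ≠ 0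

lemma posDef_submatrix_of_injective {n m : Type*} [Fintype n] [Fintype m]
    [DecidableEq n] [DecidableEq m] {A : Matrix n n ℝ} (hA : A.PosDef)
    (f : m → n) (hf : Function.Injective f) : (A.submatrix f f).PosDef := by
  refine PosDef.of_dotProduct_mulVec_pos (hA.isHermitian.submatrix f) (fun x hx => ?_)
  set y : n → ℝ := Function.extend f x (fun _ => 0) with hy
  have hyf : ∀ i, y (f i) = x i := fun i => hf.extend_apply x (fun _ => 0) i
  have hy0 : ∀ a, (¬∃ i, f i = a) → y a = 0 :=
    fun a ha => Function.extend_apply' x (fun _ => 0) a ha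
  have hyne : y ≠ 0 := by
    obtain ⟨i, hi⟩ := Function.ne_iff.mp hx
    exact Function.ne_iff.mpr ⟨f i, by simpa [hyf i] using hi⟩
  have hsum : ∀ g : n → ℝ, (∀ a, (¬∃ i, f i = a) → g a = 0) →
      ∑ a, g a = ∑ i, g (f i) := by
    intro g hg
    calc ∑ a, g a = ∑ a ∈ Finset.univ.image f, g a :=
          (Finset.sum_subset (Finset.subset_univ _)
            (fun a _ ha => hg a (by simpa using ha))).symm
      _ = ∑ i, g (f i) := Finset.sum_image (fun i _ j _ h => hf h)
  have key : star y ⬝ᵥ A.mulVec y = star x ⬝ᵥ (A.submatrix f f).mulVec x := by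
    simp only [dotProduct, mulVec, dotProduct, submatrix_apply, star_trivial, Pi.star_apply]
    rw [hsum (fun a => y a * ∑ b, A a b * y b)
      (fun a ha => by simp only [hy0 a ha]; ring)]
    refine Finset.sum_congr rfl fun i _ => ?_
    rw [hsum (fun b => A (f i) b * y b) (fun b hb => by simp only [hy0 b hb]; ring)]
    simp [hyf]
  rw [← key]
  exact hA.dotProduct_mulVec_pos hyne


/-- Lemma 4.1, equation (eq:new): for the solution `b̃` of `Π_Σ(b)` with index set `I`,
for every `x ∈ ℝ^d` and every index set `F ⊇ I`,
`x^⊤Σ⁻¹b̃ = x_F^⊤(Σ_FF)⁻¹b̃_F`. -/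
theorem quadratic_programming_projection
    (d : ℕ) (A : Matrix (Fin d) (Fin d) ℝ) (hA : A.PosDef)
    (b : Fin d → ℝ) (hb : ∃ i, 0 < b i)
    (bt : Fin d → ℝ) (I : Finset (Fin d))
    (hsol : IsQPSol A b bt) (hI : IsQPIndex A b bt I) :
    ∀ x : Fin d → ℝ, ∀ F : Finset (Fin d), I ⊆ F →
      x ⬝ᵥ A⁻¹.mulVec bt = subV x F ⬝ᵥ (subM A F F)⁻¹.mulVec (subV bt F) := by
  obtain ⟨hne, hbtI, hpos, hbtIc⟩ := hI
  intro x F hIF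
  -- the coefficient vector on `I`, extended by zero
  set v : ↥I → ℝ := (subM A I I)⁻¹.mulVec (subV b I) with hv
  set w : Fin d → ℝ := fun i => if h : i ∈ I then v ⟨i, h⟩ else 0 with hw
  have hw0 : ∀ i, i ∉ I → w i = 0 := fun i hi => by simp [hw, hi]
  -- principal submatrices are positive definite, hence invertible
  have hsub : ∀ G : Finset (Fin d), (subM A G G).PosDef := fun G =>
    posDef_submatrix_of_injective hA _ Subtype.val_injective
  have hdetI : IsUnit (subM A I I).det := (hsub I).det_pos.ne'.isUnit
  have hdetF : IsUnit (subM A F F).det := (hsub F).det_pos.ne'.isUnit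
  have hdetA : IsUnit A.det := hA.det_pos.ne'.isUnit
  -- a generic sum-restriction computation
  have hrow : ∀ j : Fin d, (A.mulVec w) j = (fun i : ↥I => A j i) ⬝ᵥ v := by
    intro j
    have : ∀ i ∈ Finset.univ, i ∉ I → A j i * w i = 0 := by
      intro i _ hi; rw [hw0 i hi, mul_zero]
    calc (A.mulVec w) j = ∑ i, A j i * w i := rfl
      _ = ∑ i ∈ I, A j i * w i :=
          (Finset.sum_subset (Finset.subset_univ _) this).symm
      _ = ∑ i : ↥I, A j (↑i) * w ↑i := (Finset.sum_coe_sort I (fun i => A j i * w i)).symm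
      _ = (fun i : ↥I => A j i) ⬝ᵥ v := by
          refine Finset.sum_congr rfl fun i _ => ?_
          simp [hw, i.2]
  -- `A *ᵥ w = bt`
  have hAw : A.mulVec w = bt := by
    funext j
    rw [hrow j]
    by_cases hj : j ∈ I
    · have : (fun i : ↥I => A j i) ⬝ᵥ v = ((subM A I I).mulVec v) ⟨j, hj⟩ := rfl
      rw [this, hv, mulVec_mulVec, mul_nonsing_inv _ hdetI, one_mulVec]
      exact (hbtI j hj).symm
    · exact (hbtIc j hj).symm
  -- left-hand side: `A⁻¹ *ᵥ bt = w`
  have hinv : A⁻¹.mulVec bt = w := by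
    rw [← hAw, mulVec_mulVec, nonsing_inv_mul _ hdetA, one_mulVec]
  -- right-hand side: `(subM A F F)⁻¹ *ᵥ (subV bt F) = subV w F`
  have hFw : (subM A F F).mulVec (subV w F) = subV bt F := by
    funext j
    have : ∀ i ∈ Finset.univ, i ∉ F → A (↑j) i * w i = 0 := by
      intro i _ hi; rw [hw0 i (fun h => hi (hIF h)), mul_zero]
    have hcalc : ((subM A F F).mulVec (subV w F)) j = (A.mulVec w) ↑j := by
      calc ((subM A F F).mulVec (subV w F)) j
          = ∑ i : ↥F, A (↑j) (↑i) * w ↑i := rfl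
        _ = ∑ i ∈ F, A (↑j) i * w i := Finset.sum_coe_sort F (fun i => A (↑j) i * w i)
        _ = ∑ i, A (↑j) i * w i := Finset.sum_subset (Finset.subset_univ _) this
        _ = (A.mulVec w) ↑j := rfl
    rw [hcalc, hAw]; rfl
  have hinvF : (subM A F F)⁻¹.mulVec (subV bt F) = subV w F := by
    rw [← hFw, mulVec_mulVec, nonsing_inv_mul _ hdetF, one_mulVec]
  -- conclude: both sides are `∑ i, x i * w i`
  rw [hinv, hinvF]
  have : ∀ i ∈ Finset.univ, i ∉ F → x i * w i = 0 := by
    intro i _ hi; rw [hw0 i (fun h => hi (hIF h)), mul_zero]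
  calc x ⬝ᵥ w = ∑ i, x i * w i := rfl
    _ = ∑ i ∈ F, x i * w i := (Finset.sum_subset (Finset.subset_univ _) this).symm
    _ = ∑ i : ↥F, x (↑i) * w ↑i := (Finset.sum_coe_sort F (fun i => x i * w i)).symm
    _ = subV x F ⬝ᵥ subV w F := rfl
end
end

section
/- Let \Sigma be a d \times d positive definite matrix and b \in R^d \setminus (-\infty,0]^d. If for some non-empty index set I \subseteq {1,...,d} one has (\Sigma_{II})^{-1} b_I > 0_I componentwise and \Sigma_{I^c I}(\Sigma_{II})^{-1} b_I \ge b_{I^c}, then the vector \tilde b defined by \tilde b_I = b_I and \tilde b_{I^c} = \Sigma_{I^c I}(\Sigma_{II})^{-1} b_I is the (unique) solution of the quadratic programming problem \Pi_\Sigma(b): minimize x^T \Sigma^{-1} x subject to x \ge b componentwise. -/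
open MeasureTheory ProbabilityTheory Filter Matrix
open scoped Topology ENNReal

noncomputable section

private lemma dot_extend {d : ℕ} (I : Finset (Fin d)) (f g : Fin d → ℝ)
    (h0 : ∀ j ∉ I, f j * g j = 0) : f ⬝ᵥ g = ∑ j : ↥I, f j * g j := by
  show ∑ j, f j * g j = _
  rw [Finset.sum_coe_sort I (fun j => f j * g j)]
  exact (Finset.sum_subset (Finset.subset_univ I) fun j _ hj => h0 j hj).symm

private lemma mulVec_extend {d : ℕ} (A : Matrix (Fin d) (Fin d) ℝ) (I : Finset (Fin d))
    (g : Fin d → ℝ) (hg : ∀ j ∉ I, g j = 0) (j : Fin d) :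
    A.mulVec g j = ∑ k : ↥I, A j k * g k :=
  dot_extend I (fun k => A j k) g (fun k hk => by rw [hg k hk, mul_zero])

/-- Lemma 4.1 (converse): if for a non-empty index set `I` one has `(Σ_II)⁻¹b_I > 0`
componentwise and `Σ_{I^cI}(Σ_II)⁻¹b_I ≥ b_{I^c}`, then the vector `b̃` with `b̃_I = b_I`
and `b̃_{I^c} = Σ_{I^cI}(Σ_II)⁻¹b_I` is the unique solution of `Π_Σ(b)`. -/
theorem quadratic_programming_converse
    (d : ℕ) (A : Matrix (Fin d) (Fin d) ℝ) (hA : A.PosDef)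
    (b : Fin d → ℝ) (hb : ∃ i, 0 < b i)
    (I : Finset (Fin d)) (hIne : I.Nonempty)
    (hpos : ∀ i : ↥I, 0 < (subM A I I)⁻¹.mulVec (subV b I) i)
    (hge : ∀ j, j ∉ I →
      b j ≤ (fun i : ↥I => A j i) ⬝ᵥ (subM A I I)⁻¹.mulVec (subV b I)) :
    ∀ bt : Fin d → ℝ, (∀ i ∈ I, bt i = b i) →
      (∀ j, j ∉ I → bt j = (fun i : ↥I => A j i) ⬝ᵥ (subM A I I)⁻¹.mulVec (subV b I)) →
      IsQPSol A b bt ∧ ∀ x : Fin d → ℝ, IsQPSol A b x → x = bt := by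
  intro bt htI htIc
  have hsymA : ∀ i j, A j i = A i j := fun i j => by
    conv_lhs => rw [← hA.1]
    simp [Matrix.conjTranspose_apply]
  -- S = Σ_II is positive definite
  set S := subM A I I with hSdef
  have hS : S.PosDef := by
    refine Matrix.PosDef.of_dotProduct_mulVec_pos ?_ ?_
    · ext i j
      simp only [Matrix.conjTranspose_apply, star_trivial]
      exact hsymA i j
    · intro x hx
      set xe : Fin d → ℝ := fun j => if h : j ∈ I then x ⟨j, h⟩ else 0 with hxe
      have hxe0 : ∀ j ∉ I, xe j = 0 := fun j hj => by simp [hxe, hj]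
      have hxec : ∀ k : ↥I, xe k = x k := fun k => by simp [hxe, k.2]
      have hxene : xe ≠ 0 := by
        obtain ⟨i, hi⟩ := Function.ne_iff.mp hx
        refine Function.ne_iff.mpr ⟨i, ?_⟩
        simpa [hxec i] using hi
      have := hA.dotProduct_mulVec_pos hxene
      have hcalc : star xe ⬝ᵥ A *ᵥ xe = star x ⬝ᵥ S *ᵥ x := by
        simp only [star_trivial]
        rw [dot_extend I xe (A *ᵥ xe) (fun j hj => by rw [hxe0 j hj, zero_mul])]
        refine Finset.sum_congr rfl fun j _ => ?_
        rw [mulVec_extend A I xe hxe0, hxec j]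
        congr 1
        show _ = ∑ k : ↥I, S j k * x k
        exact Finset.sum_congr rfl fun k _ => by rw [hxec k]; rfl
      rwa [hcalc] at this
  have hSdet : IsUnit S.det := hS.det_pos.ne'.isUnit
  set w' : ↥I → ℝ := S⁻¹.mulVec (subV b I) with hw'
  set w : Fin d → ℝ := fun j => if h : j ∈ I then w' ⟨j, h⟩ else 0 with hwdef
  have hw0 : ∀ j ∉ I, w j = 0 := fun j hj => by simp [hwdef, hj]
  have hwc : ∀ k : ↥I, w k = w' k := fun k => by simp [hwdef, k.2]
  have hSw : S.mulVec w' = subV b I := by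
    rw [hw', Matrix.mulVec_mulVec, Matrix.mul_nonsing_inv S hSdet, Matrix.one_mulVec]
  -- A w = bt
  have hAw : A.mulVec w = bt := by
    funext j
    rw [mulVec_extend A I w hw0]
    by_cases hj : j ∈ I
    · have : ∑ k : ↥I, A j k * w k = S.mulVec w' ⟨j, hj⟩ := by
        refine Finset.sum_congr rfl fun k _ => by rw [hwc k]; rfl
      rw [this, hSw, htI j hj]; rfl
    · rw [htIc j hj]
      refine Finset.sum_congr rfl fun k _ => by rw [hwc k]
  have hAdet : IsUnit A.det := hA.det_pos.ne'.isUnit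
  have hABw : A⁻¹.mulVec bt = w := by
    rw [← hAw, Matrix.mulVec_mulVec, Matrix.nonsing_inv_mul A hAdet, Matrix.one_mulVec]
  have hAinv : A⁻¹.PosDef := hA.inv
  have hMsymm : ∀ i j, A⁻¹ j i = A⁻¹ i j := fun i j => by
    conv_lhs => rw [← hAinv.1]
    simp [Matrix.conjTranspose_apply]
  have hsymInv : ∀ u v : Fin d → ℝ, u ⬝ᵥ A⁻¹.mulVec v = v ⬝ᵥ A⁻¹.mulVec u := by
    intro u v
    simp only [Matrix.mulVec, dotProduct, Finset.mul_sum]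
    rw [Finset.sum_comm]
    refine Finset.sum_congr rfl fun i _ => Finset.sum_congr rfl fun j _ => ?_
    rw [hMsymm j i]; ring
  -- quadratic expansion
  have key : ∀ x : Fin d → ℝ, x ⬝ᵥ A⁻¹.mulVec x
      = bt ⬝ᵥ A⁻¹.mulVec bt + 2 * ((x - bt) ⬝ᵥ w) + (x - bt) ⬝ᵥ A⁻¹.mulVec (x - bt) := by
    intro x
    have hx : bt + (x - bt) = x := by abel
    conv_lhs => rw [← hx]
    rw [add_dotProduct, Matrix.mulVec_add, dotProduct_add, dotProduct_add,
      hsymInv bt (x - bt), hABw]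
    ring
  have hquad : ∀ y : Fin d → ℝ, 0 ≤ y ⬝ᵥ A⁻¹.mulVec y := by
    intro y
    by_cases hy : y = 0
    · simp [hy]
    · have := hAinv.dotProduct_mulVec_pos hy
      simpa using this.le
  have hdot : ∀ x : Fin d → ℝ, (∀ i, b i ≤ x i) → 0 ≤ (x - bt) ⬝ᵥ w := by
    intro x hxb
    rw [dot_extend I (x - bt) w (fun j hj => by rw [hw0 j hj, mul_zero])]
    refine Finset.sum_nonneg fun j _ => mul_nonneg ?_ ?_
    · have : bt (j : Fin d) = b j := htI j j.2
      simp only [Pi.sub_apply, this]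
      linarith [hxb (j : Fin d)]
    · rw [hwc j]; exact (hpos j).le
  have hbtb : ∀ i, b i ≤ bt i := by
    intro i
    by_cases hi : i ∈ I
    · rw [htI i hi]
    · rw [htIc i hi]; exact hge i hi
  have hsol : IsQPSol A b bt := by
    refine ⟨hbtb, fun x hxb => ?_⟩
    rw [key x]
    have h1 := hdot x hxb
    have h2 := hquad (x - bt)
    linarith
  refine ⟨hsol, fun x hx => ?_⟩
  obtain ⟨hxb, hxmin⟩ := hx
  have hle : x ⬝ᵥ A⁻¹.mulVec x ≤ bt ⬝ᵥ A⁻¹.mulVec bt := hxmin bt hbtb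
  have h1 := hdot x hxb
  have h2 := hquad (x - bt)
  have hzero : (x - bt) ⬝ᵥ A⁻¹.mulVec (x - bt) = 0 := by
    have := key x
    linarith
  by_contra hne
  have hyne : x - bt ≠ 0 := sub_ne_zero.mpr hne
  have := hAinv.dotProduct_mulVec_pos hyne
  rw [show star (x - bt) = x - bt from star_trivial _] at this
  exact absurd hzero (ne_of_gt this)
end
end
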